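/- arXiv:2003.02894 — 2 statements merged into one kernel-verified Lean document; each statement's English description precedes it below -/
import Mathlib

section
/- In a finite MDP with rewards bounded by R_max and discount γ ∈ [0,1), for any two transition models p, p', any stationary policy π and any state s: |v_p^π(s) - v_{p'}^π(s)| ≤ γ R_max ‖p_s - p'_s‖_{∞,1} / (1-γ)², where ‖p_s - p'_s‖_{∞,1} := max_{a∈A} Σ_{s'∈S} |p(s'|s,a) - p'(s'|s,a)| is understood as the maximal total-variation-type distance over all states (i.e., with the max also taken over s). -/
open scoped BigOperators

/-- simulation lemma, Strehl–Littman: in a finite MDP with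
rewards bounded by `Rmax` and discount `γ ∈ [0,1)`, for any two transition
models `p, p'`, any stationary policy `π` and any state `s`,
`|v_p^π(s) - v_{p'}^π(s)| ≤ γ Rmax ‖p - p'‖_{∞,1} / (1-γ)²`, where
`‖p - p'‖_{∞,1} = max_{s,a} ∑_{s'} |p(s'|s,a) - p'(s'|s,a)|`. -/
theorem simulation_lemma {S A : Type} [Fintype S] [Fintype A]
    [Nonempty S] [Nonempty A]
    (r : S → A → ℝ) (Rmax γ : ℝ)
    (hr : ∀ s a, |r s a| ≤ Rmax)
    (hγ0 : 0 ≤ γ) (hγ1 : γ < 1)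
    (π : S → A)
    (p p' : S → A → S → ℝ)
    (hp0 : ∀ s a s', 0 ≤ p s a s') (hp1 : ∀ s a, ∑ s', p s a s' = 1)
    (hp0' : ∀ s a s', 0 ≤ p' s a s') (hp1' : ∀ s a, ∑ s', p' s a s' = 1)
    (v v' : S → ℝ)
    (hBell : ∀ s, v s = r s (π s) + γ * ∑ s', p s (π s) s' * v s')
    (hBell' : ∀ s, v' s = r s (π s) + γ * ∑ s', p' s (π s) s' * v' s')
    (s : S) :
    |v s - v' s| ≤
      γ * Rmax * (⨆ t : S, ⨆ a : A, ∑ s', |p t a s' - p' t a s'|) / (1 - γ) ^ 2 := by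
  have h1γ : 0 < 1 - γ := by linarith
  obtain ⟨t, ht⟩ := Finite.exists_max (fun u : S => |v u - v' u|)
  obtain ⟨w, hw⟩ := Finite.exists_max (fun u : S => |v' u|)
  set M := |v t - v' t| with hMdef
  set V := |v' w| with hVdef
  set D := (⨆ u : S, ⨆ a : A, ∑ s', |p u a s' - p' u a s'|) with hDdef
  have hDge : ∀ u a, ∑ s', |p u a s' - p' u a s'| ≤ D := by
    intro u a
    have h1 : ∑ s', |p u a s' - p' u a s'|
        ≤ ⨆ b : A, ∑ s', |p u b s' - p' u b s'| :=
      le_ciSup (f := fun b : A => ∑ s', |p u b s' - p' u b s'|)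
        (Set.finite_range _).bddAbove a
    have h2 : (⨆ b : A, ∑ s', |p u b s' - p' u b s'|) ≤ D :=
      le_ciSup (f := fun z : S => ⨆ b : A, ∑ s', |p z b s' - p' z b s'|)
        (Set.finite_range _).bddAbove u
    exact h1.trans h2
  have hD0 : 0 ≤ D :=
    le_trans (Finset.sum_nonneg fun _ _ => abs_nonneg _) (hDge t (π t))
  have hM0 : 0 ≤ M := abs_nonneg _
  have hV0 : 0 ≤ V := abs_nonneg _
  -- bound on V
  have hVbound : V * (1 - γ) ≤ Rmax := by
    have hsum : |∑ s', p' w (π w) s' * v' s'| ≤ V := by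
      calc |∑ s', p' w (π w) s' * v' s'|
          ≤ ∑ s', |p' w (π w) s' * v' s'| := Finset.abs_sum_le_sum_abs _ _
        _ ≤ ∑ s', p' w (π w) s' * V := by
            refine Finset.sum_le_sum fun u _ => ?_
            rw [abs_mul, abs_of_nonneg (hp0' w (π w) u)]
            exact mul_le_mul_of_nonneg_left (hw u) (hp0' w (π w) u)
        _ = V := by rw [← Finset.sum_mul, hp1' w (π w), one_mul]
    have h2 : V ≤ Rmax + γ * V := by
      calc V = |r w (π w) + γ * ∑ s', p' w (π w) s' * v' s'| := by
              rw [hVdef, hBell' w]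
        _ ≤ |r w (π w)| + |γ * ∑ s', p' w (π w) s' * v' s'| := abs_add_le _ _
        _ ≤ Rmax + γ * V := by
            refine add_le_add (hr w (π w)) ?_
            rw [abs_mul, abs_of_nonneg hγ0]
            exact mul_le_mul_of_nonneg_left hsum hγ0
    nlinarith
  -- bound on M
  have hMbound : M * (1 - γ) ≤ γ * (D * V) := by
    have hsplit : v t - v' t =
        γ * (∑ s', p t (π t) s' * (v s' - v' s')
          + ∑ s', (p t (π t) s' - p' t (π t) s') * v' s') := by
      rw [hBell t, hBell' t, ← Finset.sum_add_distrib]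
      have he : ∀ x : S, p t (π t) x * (v x - v' x) + (p t (π t) x - p' t (π t) x) * v' x
          = p t (π t) x * v x - p' t (π t) x * v' x := fun x => by ring
      rw [Finset.sum_congr rfl (fun x _ => he x), Finset.sum_sub_distrib]
      ring
    have h1 : |∑ s', p t (π t) s' * (v s' - v' s')| ≤ M := by
      calc |∑ s', p t (π t) s' * (v s' - v' s')|
          ≤ ∑ s', |p t (π t) s' * (v s' - v' s')| := Finset.abs_sum_le_sum_abs _ _
        _ ≤ ∑ s', p t (π t) s' * M := by
            refine Finset.sum_le_sum fun u _ => ?_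
            rw [abs_mul, abs_of_nonneg (hp0 t (π t) u)]
            exact mul_le_mul_of_nonneg_left (ht u) (hp0 t (π t) u)
        _ = M := by rw [← Finset.sum_mul, hp1 t (π t), one_mul]
    have h2 : |∑ s', (p t (π t) s' - p' t (π t) s') * v' s'| ≤ D * V := by
      calc |∑ s', (p t (π t) s' - p' t (π t) s') * v' s'|
          ≤ ∑ s', |(p t (π t) s' - p' t (π t) s') * v' s'| :=
            Finset.abs_sum_le_sum_abs _ _
        _ ≤ ∑ s', |p t (π t) s' - p' t (π t) s'| * V := by
            refine Finset.sum_le_sum fun u _ => ?_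
            rw [abs_mul]
            exact mul_le_mul_of_nonneg_left (hw u) (abs_nonneg _)
        _ = (∑ s', |p t (π t) s' - p' t (π t) s'|) * V := by rw [Finset.sum_mul]
        _ ≤ D * V := mul_le_mul_of_nonneg_right (hDge t (π t)) hV0
    have h3 : M ≤ γ * (M + D * V) := by
      calc M = |v t - v' t| := hMdef
        _ = |γ * (∑ s', p t (π t) s' * (v s' - v' s')
              + ∑ s', (p t (π t) s' - p' t (π t) s') * v' s')| := by rw [hsplit]
        _ ≤ γ * (M + D * V) := by
            rw [abs_mul, abs_of_nonneg hγ0]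
            refine mul_le_mul_of_nonneg_left ?_ hγ0
            exact le_trans (abs_add_le _ _) (add_le_add h1 h2)
    nlinarith
  have hfinal : M ≤ γ * Rmax * D / (1 - γ) ^ 2 := by
    rw [le_div_iff₀ (by positivity : (0:ℝ) < (1 - γ) ^ 2)]
    nlinarith [mul_le_mul_of_nonneg_right hMbound (le_of_lt h1γ),
      mul_le_mul_of_nonneg_left hVbound (mul_nonneg hγ0 hD0)]
  exact le_trans (ht s) hfinal
end

section
/- Consider a finite-state Wasserstein DRMDP whose ambiguity set is the 1-Wasserstein ball 𝔐_α(μ̂_n) of radius α centered at the empirical distribution μ̂_n = (1/n)Σ_{i=1}^n δ_{p̂_i} over transition models. For every policy π and state s, the distributionally robust value function satisfies the lower bound: inf_{μ∈𝔐_α(μ̂_n)} E_{p∼μ}[v_p^π(s)] ≥ (1/n)Σ_{i=1}^n v_{p̂_i}^π(s) - κ_s^π · α, where κ_s^π := sup{‖z‖_* : z in the effective domain of (ũ_s^π)*} and ũ_s^π is the L-Lipschitz extension of p ↦ v_p^π(s); moreover κ_s^π ≤ βγR_max/(1-γ)², where β satisfies Σ_s ‖p_s‖_{∞,1} ≤ β‖p‖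 for the chosen norm. -/
open MeasureTheory
open scoped BigOperators ENNReal

/-- Transition models of a finite MDP: `p s a s'` is the probability of moving
from `s` to `s'` under action `a`. -/
abbrev Model (S A : Type) : Type := S → A → S → ℝ

/-- `p` is a transition kernel: nonnegative and rows summing to one. -/
def IsKernel {S A : Type} [Fintype S] (p : Model S A) : Prop :=
  ∀ s a, (∀ s', 0 ≤ p s a s') ∧ ∑ s', p s a s' = 1

/-- Euclidean pairing on the model space. -/
noncomputable def dotp {S A : Type} [Fintype S] [Fintype A]
    (z q : Model S A) : ℝ :=
  ∑ s, ∑ a, ∑ s', z s a s' * q s a s'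

/-- Dual norm with respect to a norm `N` on the model space. -/
noncomputable def dualN {S A : Type} [Fintype S] [Fintype A]
    (N : Model S A → ℝ) (z : Model S A) : ℝ :=
  sSup {r | ∃ x : Model S A, N x ≤ 1 ∧ r = dotp z x}

/-- Legendre–Fenchel conjugate of a real-valued function on the model space. -/
noncomputable def conjM {S A : Type} [Fintype S] [Fintype A]
    (f : Model S A → ℝ) (z : Model S A) : EReal :=
  ⨆ q : Model S A, ((dotp z q - f q : ℝ) : EReal)

/-- 1-Wasserstein distance (w.r.t. the norm `N`) between measures on models,
defined as the infimum over couplings of the expected distance. -/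
noncomputable def wassDist {S A : Type} [Fintype S] [Fintype A]
    (N : Model S A → ℝ) (μ ν : Measure (Model S A)) : ℝ :=
  sInf {c | ∃ γ : Measure (Model S A × Model S A),
    IsProbabilityMeasure γ ∧ γ.map Prod.fst = μ ∧ γ.map Prod.snd = ν ∧
    c = ∫ q, N (q.1 - q.2) ∂γ}

/-- Empirical distribution `μ̂_n = (1/n) ∑ᵢ δ_{p̂ᵢ}` over transition models. -/
noncomputable def empiricalM {S A : Type} [Fintype S] [Fintype A]
    (n : ℕ) (phat : Fin n → Model S A) : Measure (Model S A) :=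
  ((n : ℝ≥0∞)⁻¹) • ∑ i : Fin n, Measure.dirac (phat i)

/-- `L`-Lipschitz continuation `ũ_s^π` of `p ↦ v_p^π(s)` from the set of
kernels to the whole model space. -/
noncomputable def lipExt {S A : Type} [Fintype S] [Fintype A]
    (N : Model S A → ℝ) (val : Model S A → S → ℝ) (s : S) (L : ℝ)
    (q : Model S A) : ℝ :=
  sInf {y | ∃ p : Model S A, IsKernel p ∧ y = val p s + L * N (p - q)}


section Helpers

variable {S A : Type} [Fintype S] [Fintype A]

open scoped Classical in
/-- coordinate "basis vector" in the model space -/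
noncomputable def msingle (s0 : S) (a0 : A) (s0' : S) : Model S A :=
  fun s a s' => if s = s0 then (if a = a0 then (if s' = s0' then (1:ℝ) else 0) else 0) else 0

lemma msingle_decomp (v : Model S A) :
    ∑ s0 : S, ∑ a0 : A, ∑ s0' : S, v s0 a0 s0' • msingle s0 a0 s0' = v := by
  classical
  funext s a s'
  simp only [Finset.sum_apply, Pi.smul_apply, smul_eq_mul, msingle]
  rw [Finset.sum_eq_single_of_mem s (Finset.mem_univ s)]
  · rw [Finset.sum_eq_single_of_mem a (Finset.mem_univ a)]
    · rw [Finset.sum_eq_single_of_mem s' (Finset.mem_univ s')]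
      · simp
      · intro b _ hb; simp [Ne.symm hb]
    · intro b _ hb; simp [Ne.symm hb]
  · intro b _ hb; simp [Ne.symm hb]

lemma N_sum_le {ι : Type*} (N : Model S A → ℝ) (hN0 : N 0 = 0)
    (hNadd : ∀ x y, N (x + y) ≤ N x + N y)
    (t : Finset ι) (f : ι → Model S A) :
    N (∑ i ∈ t, f i) ≤ ∑ i ∈ t, N (f i) := by
  classical
  induction t using Finset.induction_on with
  | empty => simp [hN0]
  | insert _ _ hnot ih =>
    rename_i j t'
    rw [Finset.sum_insert hnot, Finset.sum_insert hnot]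
    exact le_trans (hNadd _ _) (by linarith)

lemma dotp_linear (g : Model S A →ₗ[ℝ] ℝ) (q : Model S A) :
    dotp (fun s0 a0 s0' => g (msingle s0 a0 s0')) q = g q := by
  conv_rhs => rw [← msingle_decomp q]
  rw [map_sum]
  unfold dotp
  refine Finset.sum_congr rfl fun s0 _ => ?_
  rw [map_sum]
  refine Finset.sum_congr rfl fun a0 _ => ?_
  rw [map_sum]
  refine Finset.sum_congr rfl fun s0' _ => ?_
  rw [_root_.map_smul, smul_eq_mul, mul_comm]

end Helpers

set_option maxHeartbeats 3000000 in
/-- tabular Wasserstein DRMDP bound: for every policy `π` and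
state `s`, the distributionally robust value over the 1-Wasserstein ball of
radius `α` around the empirical distribution satisfies
`inf_{μ ∈ 𝔐_α(μ̂_n)} E_{p∼μ}[v_p^π(s)] ≥ (1/n) ∑ᵢ v_{p̂ᵢ}^π(s) - κ_s^π α`,
where `κ_s^π = sup {‖z‖_* : z ∈ dom (ũ_s^π)*}` and moreover
`κ_s^π ≤ β γ R_max / (1-γ)²`. -/
theorem tabular_wdrmdp_regularization {S A : Type} [Fintype S] [Fintype A]
    [Nonempty S] [Nonempty A]
    (r : S → A → ℝ) (Rmax γ β α : ℝ)
    (hr : ∀ s a, |r s a| ≤ Rmax)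
    (hγ0 : 0 ≤ γ) (hγ1 : γ < 1) (hα : 0 ≤ α) (hβ : 0 ≤ β)
    (N : Model S A → ℝ)
    (hN0 : ∀ x, N x = 0 ↔ x = 0)
    (hNadd : ∀ x y, N (x + y) ≤ N x + N y)
    (hNsmul : ∀ (c : ℝ) x, N (c • x) = |c| * N x)
    (hβN : ∀ p : Model S A, ∑ s, (⨆ a : A, ∑ s', |p s a s'|) ≤ β * N p)
    (π : S → A)
    (val : Model S A → S → ℝ)
    (hval : ∀ p, IsKernel p →
      ∀ s, val p s = r s (π s) + γ * ∑ s', p s (π s) s' * val p s')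
    (n : ℕ) (hn : 0 < n)
    (phat : Fin n → Model S A) (hphat : ∀ i, IsKernel (phat i))
    (s : S) (κ : ℝ)
    (hκ : κ = sSup {c | ∃ z : Model S A,
      conjM (lipExt N val s (β * γ * Rmax / (1 - γ) ^ 2)) z < ⊤ ∧
      c = dualN N z}) :
    (⨅ μ : {μ : Measure (Model S A) //
        IsProbabilityMeasure μ ∧ μ {p : Model S A | ¬ IsKernel p} = 0 ∧
        wassDist N (empiricalM n phat) μ ≤ α},
      ∫ p, val p s ∂(μ : Measure (Model S A))) ≥
        (1 / n : ℝ) * (∑ i : Fin n, val (phat i) s) - κ * α ∧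
    κ ≤ β * γ * Rmax / (1 - γ) ^ 2 := by
  classical
  haveI hmsc : MeasurableSingletonClass (Model S A) :=
    @Pi.instMeasurableSingletonClass _ _ _ _ (fun _ => inferInstance)
  haveI homp : OpensMeasurableSpace (Model S A × Model S A) :=
    @Prod.opensMeasurableSpace _ _ _ _ _ _ _ _ (by infer_instance)
  have hγ' : (0:ℝ) < 1 - γ := by linarith
  have hRmax : 0 ≤ Rmax :=
    le_trans (abs_nonneg _) (hr (Classical.arbitrary S) (Classical.arbitrary A))
  set L : ℝ := β * γ * Rmax / (1 - γ) ^ 2 with hLdef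
  have hL0 : 0 ≤ L := by
    apply div_nonneg (by positivity) (by positivity)
  set M : ℝ := Rmax / (1 - γ) with hMdef
  have hM0 : 0 ≤ M := div_nonneg hRmax (le_of_lt hγ')
  -- basic norm facts
  have hN00 : N 0 = 0 := (hN0 0).mpr rfl
  have hNneg : ∀ x, N (-x) = N x := by
    intro x; have h := hNsmul (-1) x; simpa using h
  have hNnn : ∀ x, 0 ≤ N x := by
    intro x
    have h := hNadd x (-x)
    rw [add_neg_cancel, hN00, hNneg] at h
    linarith
  have hNsub : ∀ x y, N (x - y) = N (y - x) := by
    intro x y; rw [← hNneg (x - y), neg_sub]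
  -- kernel entries are in [0,1]
  have hker01 : ∀ p : Model S A, IsKernel p → ∀ s0 a0 s0', 0 ≤ p s0 a0 s0' ∧ p s0 a0 s0' ≤ 1 := by
    intro p hp s0 a0 s0'
    obtain ⟨hpos, hsum⟩ := hp s0 a0
    refine ⟨hpos s0', ?_⟩
    calc p s0 a0 s0' ≤ ∑ s', p s0 a0 s' :=
          Finset.single_le_sum (fun i _ => hpos i) (Finset.mem_univ _)
      _ = 1 := hsum
  -- value function bound
  have hvalM : ∀ p : Model S A, IsKernel p → ∀ t, |val p t| ≤ M := by
    intro p hp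
    obtain ⟨t0, ht0⟩ := Finite.exists_max (fun t => |val p t|)
    have hsumb : |∑ s', p t0 (π t0) s' * val p s'| ≤ |val p t0| := by
      calc |∑ s', p t0 (π t0) s' * val p s'| ≤ ∑ s', |p t0 (π t0) s' * val p s'| :=
            Finset.abs_sum_le_sum_abs _ _
        _ = ∑ s', p t0 (π t0) s' * |val p s'| := by
            refine Finset.sum_congr rfl fun s' _ => ?_
            rw [abs_mul, abs_of_nonneg ((hp t0 (π t0)).1 s')]
        _ ≤ ∑ s', p t0 (π t0) s' * |val p t0| :=
            Finset.sum_le_sum fun s' _ =>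
              mul_le_mul_of_nonneg_left (ht0 s') ((hp t0 (π t0)).1 s')
        _ = |val p t0| := by rw [← Finset.sum_mul, (hp t0 (π t0)).2, one_mul]
    have hb : |val p t0| ≤ Rmax + γ * |val p t0| := by
      calc |val p t0|
          = |r t0 (π t0) + γ * ∑ s', p t0 (π t0) s' * val p s'| := by
            rw [← hval p hp t0]
        _ ≤ |r t0 (π t0)| + |γ * ∑ s', p t0 (π t0) s' * val p s'| := abs_add_le _ _
        _ = |r t0 (π t0)| + γ * |∑ s', p t0 (π t0) s' * val p s'| := by
            rw [abs_mul, abs_of_nonneg hγ0]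
        _ ≤ Rmax + γ * |val p t0| := by
            have := hr t0 (π t0)
            have := mul_le_mul_of_nonneg_left hsumb hγ0
            linarith
    have key : |val p t0| ≤ M := by
      rw [hMdef, le_div_iff₀ hγ']
      nlinarith [abs_nonneg (val p t0)]
    intro t; exact le_trans (ht0 t) key
  -- simulation lemma
  have hrow : ∀ x : Model S A, ∀ t : S, ∑ s', |x t (π t) s'| ≤ β * N x := by
    intro x t
    have hnn : ∀ t' : S, 0 ≤ ⨆ a : A, ∑ s', |x t' a s'| := by
      intro t'
      refine le_trans ?_ (le_ciSup (f := fun a : A => ∑ s', |x t' a s'|)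
        (Set.Finite.bddAbove (Set.finite_range _)) (Classical.arbitrary A))
      positivity
    have h1 : ∑ s', |x t (π t) s'| ≤ ⨆ a : A, ∑ s', |x t a s'| :=
      le_ciSup (f := fun a : A => ∑ s', |x t a s'|)
        (Set.Finite.bddAbove (Set.finite_range _)) (π t)
    have h2 : (⨆ a : A, ∑ s', |x t a s'|) ≤ ∑ t' : S, ⨆ a : A, ∑ s', |x t' a s'| :=
      Finset.single_le_sum (f := fun t' => ⨆ a : A, ∑ s', |x t' a s'|)
        (fun t' _ => hnn t') (Finset.mem_univ t)
    exact le_trans h1 (le_trans h2 (hβN x))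
  have hsim : ∀ p q : Model S A, IsKernel p → IsKernel q → ∀ t,
      |val p t - val q t| ≤ L * N (p - q) := by
    intro p q hp hq
    obtain ⟨t0, ht0⟩ := Finite.exists_max (fun t => |val p t - val q t|)
    have hrow' : ∀ t : S, ∑ s', |p t (π t) s' - q t (π t) s'| ≤ β * N (p - q) := by
      intro t
      have := hrow (p - q) t
      simpa using this
    have hexp : val p t0 - val q t0 =
        γ * ((∑ s', (p t0 (π t0) s' - q t0 (π t0) s') * val p s')
          + ∑ s', q t0 (π t0) s' * (val p s' - val q s')) := by
      have hmerge : (∑ s', (p t0 (π t0) s' - q t0 (π t0) s') * val p s')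
          + ∑ s', q t0 (π t0) s' * (val p s' - val q s')
          = ∑ s', p t0 (π t0) s' * val p s' - ∑ s', q t0 (π t0) s' * val q s' := by
        rw [← Finset.sum_add_distrib, ← Finset.sum_sub_distrib]
        exact Finset.sum_congr rfl fun s' _ => by ring
      rw [hmerge, hval p hp t0, hval q hq t0]
      ring
    have hA : |∑ s', (p t0 (π t0) s' - q t0 (π t0) s') * val p s'| ≤ M * (β * N (p - q)) := by
      calc |∑ s', (p t0 (π t0) s' - q t0 (π t0) s') * val p s'|
          ≤ ∑ s', |(p t0 (π t0) s' - q t0 (π t0) s') * val p s'| :=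
            Finset.abs_sum_le_sum_abs _ _
        _ ≤ ∑ s', |p t0 (π t0) s' - q t0 (π t0) s'| * M := by
            refine Finset.sum_le_sum fun s' _ => ?_
            rw [abs_mul]
            exact mul_le_mul_of_nonneg_left (hvalM p hp s') (abs_nonneg _)
        _ = (∑ s', |p t0 (π t0) s' - q t0 (π t0) s'|) * M := by rw [Finset.sum_mul]
        _ ≤ (β * N (p - q)) * M :=
            mul_le_mul_of_nonneg_right (hrow' t0) hM0
        _ = M * (β * N (p - q)) := by ring
    have hB : |∑ s', q t0 (π t0) s' * (val p s' - val q s')| ≤ |val p t0 - val q t0| := by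
      calc |∑ s', q t0 (π t0) s' * (val p s' - val q s')|
          ≤ ∑ s', |q t0 (π t0) s' * (val p s' - val q s')| := Finset.abs_sum_le_sum_abs _ _
        _ = ∑ s', q t0 (π t0) s' * |val p s' - val q s'| := by
            refine Finset.sum_congr rfl fun s' _ => ?_
            rw [abs_mul, abs_of_nonneg ((hq t0 (π t0)).1 s')]
        _ ≤ ∑ s', q t0 (π t0) s' * |val p t0 - val q t0| :=
            Finset.sum_le_sum fun s' _ =>
              mul_le_mul_of_nonneg_left (ht0 s') ((hq t0 (π t0)).1 s')
        _ = |val p t0 - val q t0| := by rw [← Finset.sum_mul, (hq t0 (π t0)).2, one_mul]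
    have habs : |val p t0 - val q t0| ≤
        γ * (M * (β * N (p - q)) + |val p t0 - val q t0|) := by
      calc |val p t0 - val q t0|
          = γ * |(∑ s', (p t0 (π t0) s' - q t0 (π t0) s') * val p s')
              + ∑ s', q t0 (π t0) s' * (val p s' - val q s')| := by
            rw [← abs_of_nonneg hγ0, ← abs_mul, ← hexp]
        _ ≤ γ * (M * (β * N (p - q)) + |val p t0 - val q t0|) := by
            have := abs_add_le (∑ s', (p t0 (π t0) s' - q t0 (π t0) s') * val p s')
              (∑ s', q t0 (π t0) s' * (val p s' - val q s'))
            have hmul : |(∑ s', (p t0 (π t0) s' - q t0 (π t0) s') * val p s')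
                + ∑ s', q t0 (π t0) s' * (val p s' - val q s')|
                ≤ M * (β * N (p - q)) + |val p t0 - val q t0| := by linarith
            exact mul_le_mul_of_nonneg_left hmul hγ0
    have hfinal : |val p t0 - val q t0| ≤ L * N (p - q) := by
      have h1 : (1 - γ) * |val p t0 - val q t0| ≤ γ * M * (β * N (p - q)) := by nlinarith
      have h2 : |val p t0 - val q t0| ≤ (γ * M * (β * N (p - q))) / (1 - γ) := by
        rw [le_div_iff₀ hγ']; linarith
      have h3 : (γ * M * (β * N (p - q))) / (1 - γ) = L * N (p - q) := by
        rw [hMdef, hLdef]; field_simp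
      rw [← h3]; exact h2
    intro t; exact le_trans (ht0 t) hfinal
  -- Lipschitz extension facts
  set f : Model S A → ℝ := lipExt N val s L with hfdef
  have p₀ := phat ⟨0, hn⟩
  have hp₀ : IsKernel (phat ⟨0, hn⟩) := hphat _
  have hfset : ∀ q : Model S A, f q =
      sInf {y | ∃ p : Model S A, IsKernel p ∧ y = val p s + L * N (p - q)} := fun q => rfl
  have hSne : ∀ q : Model S A,
      {y | ∃ p : Model S A, IsKernel p ∧ y = val p s + L * N (p - q)}.Nonempty :=
    fun q => ⟨val (phat ⟨0, hn⟩) s + L * N (phat ⟨0, hn⟩ - q), phat ⟨0, hn⟩, hp₀, rfl⟩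
  have hSbd : ∀ q : Model S A,
      BddBelow {y | ∃ p : Model S A, IsKernel p ∧ y = val p s + L * N (p - q)} := by
    intro q
    refine ⟨-M, ?_⟩
    rintro y ⟨p, hp, rfl⟩
    have h1 := hvalM p hp s
    have h2 : 0 ≤ L * N (p - q) := mul_nonneg hL0 (hNnn _)
    have := abs_le.mp h1
    linarith [this.1]
  have hf_lb : ∀ q, -M ≤ f q := by
    intro q
    rw [hfset]
    refine le_csInf (hSne q) ?_
    rintro y ⟨p, hp, rfl⟩
    have h1 := (abs_le.mp (hvalM p hp s)).1
    have h2 : 0 ≤ L * N (p - q) := mul_nonneg hL0 (hNnn _)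
    linarith
  have hf_le : ∀ (q p : Model S A), IsKernel p → f q ≤ val p s + L * N (p - q) := by
    intro q p hp
    rw [hfset]
    exact csInf_le (hSbd q) ⟨p, hp, rfl⟩
  have hf_eq : ∀ p : Model S A, IsKernel p → f p = val p s := by
    intro p hp
    refine le_antisymm ?_ ?_
    · have := hf_le p p hp
      rw [sub_self, hN00] at this
      linarith
    · rw [hfset]
      refine le_csInf (hSne p) ?_
      rintro y ⟨p', hp', rfl⟩
      have h1 := hsim p' p hp' hp s
      have := (abs_le.mp h1).1
      rw [hNsub p' p] at this
      rw [hNsub p' p]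
      linarith
  have hf_lip : ∀ x y, f x ≤ f y + L * N (x - y) := by
    intro x y
    rw [hfset x]
    have : ∀ y' ∈ {y' | ∃ p : Model S A, IsKernel p ∧ y' = val p s + L * N (p - y)},
        sInf {y0 | ∃ p : Model S A, IsKernel p ∧ y0 = val p s + L * N (p - x)}
          ≤ y' + L * N (x - y) := by
      rintro y' ⟨p, hp, rfl⟩
      refine le_trans (csInf_le (hSbd x) ⟨p, hp, rfl⟩) ?_
      have htr : N (p - x) ≤ N (p - y) + N (y - x) := by
        have h := hNadd (p - y) (y - x)
        have he : p - y + (y - x) = p - x := by abel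
        rw [he] at h
        exact h
      have := mul_le_mul_of_nonneg_left htr hL0
      rw [hNsub y x] at this
      linarith
    have h3 : sInf {y0 | ∃ p : Model S A, IsKernel p ∧ y0 = val p s + L * N (p - x)}
        - L * N (x - y)
        ≤ sInf {y' | ∃ p : Model S A, IsKernel p ∧ y' = val p s + L * N (p - y)} :=
      le_csInf (hSne y) fun y' hy' => by linarith [this y' hy']
    rw [hfset y]
    linarith
  have hf_lip2 : ∀ x y, |f x - f y| ≤ L * N (x - y) := by
    intro x y
    rw [abs_sub_le_iff]
    constructor
    · linarith [hf_lip x y]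
    · have := hf_lip y x
      rw [hNsub y x] at this
      linarith
  -- clamped version
  set fb : Model S A → ℝ := fun q => max (-M) (min M (f q)) with hfbdef
  have hfb_bd : ∀ q, |fb q| ≤ M := by
    intro q
    rw [abs_le]
    constructor
    · exact le_max_left _ _
    · rw [hfbdef]
      simp only
      rw [max_le_iff]
      exact ⟨by linarith, min_le_left _ _⟩
  have hfb_eq : ∀ p : Model S A, IsKernel p → fb p = val p s := by
    intro p hp
    have h := abs_le.mp (hvalM p hp s)
    rw [hfbdef]
    simp only
    rw [hf_eq p hp, min_eq_right h.2, max_eq_right h.1]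
  have hclamp : ∀ a b : ℝ, |max (-M) (min M a) - max (-M) (min M b)| ≤ |a - b| := by
    intro a b
    have h1 : |max (-M) (min M a) - max (-M) (min M b)| ≤ |min M a - min M b| := by
      rw [max_comm (-M) (min M a), max_comm (-M) (min M b)]
      exact abs_max_sub_max_le_abs _ _ _
    have h2 : |min M a - min M b| ≤ |a - b| := by
      have h := abs_max_sub_max_le_abs (-a) (-b) (-M)
      rw [← neg_inf, ← neg_inf, neg_sub_neg, neg_sub_neg] at h
      calc |min M a - min M b| = |b ⊓ M - a ⊓ M| := by
            rw [min_comm M a, min_comm M b, abs_sub_comm]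
        _ ≤ |b - a| := h
        _ = |a - b| := abs_sub_comm _ _
    exact le_trans h1 h2
  have hfb_lip : ∀ x y, fb x - fb y ≤ L * N (x - y) := by
    intro x y
    have := hclamp (f x) (f y)
    have h2 := hf_lip2 x y
    have h3 : |fb x - fb y| ≤ |f x - f y| := this
    have := (abs_le.mp (le_trans h3 h2)).2
    linarith [abs_le.mp (le_trans h3 h2) |>.1]
  -- dotp facts
  have hdotp_smul : ∀ (t : ℝ) (z x : Model S A), dotp z (t • x) = t * dotp z x := by
    intro t z x
    unfold dotp
    rw [Finset.mul_sum]
    refine Finset.sum_congr rfl fun s0 _ => ?_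
    rw [Finset.mul_sum]
    refine Finset.sum_congr rfl fun a0 _ => ?_
    rw [Finset.mul_sum]
    refine Finset.sum_congr rfl fun s0' _ => ?_
    simp only [Pi.smul_apply, smul_eq_mul]
    ring
  have hdotp_ker : ∀ (z p : Model S A), IsKernel p →
      |dotp z p| ≤ ∑ s0, ∑ a0, ∑ s0', |z s0 a0 s0'| := by
    intro z p hp
    unfold dotp
    refine le_trans (Finset.abs_sum_le_sum_abs _ _) ?_
    refine Finset.sum_le_sum fun s0 _ => ?_
    refine le_trans (Finset.abs_sum_le_sum_abs _ _) ?_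
    refine Finset.sum_le_sum fun a0 _ => ?_
    refine le_trans (Finset.abs_sum_le_sum_abs _ _) ?_
    refine Finset.sum_le_sum fun s0' _ => ?_
    rw [abs_mul]
    have h := hker01 p hp s0 a0 s0'
    have hp1 : |p s0 a0 s0'| ≤ 1 := by rw [abs_of_nonneg h.1]; exact h.2
    nlinarith [abs_nonneg (z s0 a0 s0')]
  -- every element of the dual-domain set is ≤ L
  have hdom_le : ∀ z : Model S A, conjM f z < ⊤ → ∀ x : Model S A, N x ≤ 1 → dotp z x ≤ L := by
    intro z hz x hx
    have hbot : ((dotp z (phat ⟨0, hn⟩) - f (phat ⟨0, hn⟩) : ℝ) : EReal) ≤ conjM f z :=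
      le_iSup (fun q : Model S A => ((dotp z q - f q : ℝ) : EReal)) (phat ⟨0, hn⟩)
    have hebot : conjM f z ≠ ⊥ := by
      intro h
      rw [h, le_bot_iff] at hbot
      exact EReal.coe_ne_bot _ hbot
    set C := (conjM f z).toReal with hCdef
    have heC : conjM f z = (C : EReal) := (EReal.coe_toReal (ne_of_lt hz) hebot).symm
    have hkey : ∀ q : Model S A, dotp z q - f q ≤ C := by
      intro q
      have h1 : ((dotp z q - f q : ℝ) : EReal) ≤ conjM f z :=
        le_iSup (fun q : Model S A => ((dotp z q - f q : ℝ) : EReal)) q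
      rw [heC] at h1
      exact_mod_cast h1
    set C' := C + M + L * N (phat ⟨0, hn⟩) with hC'def
    have htb : ∀ t : ℝ, 0 < t → t * dotp z x ≤ C' + L * t := by
      intro t ht
      have h1 : dotp z (t • x) - f (t • x) ≤ C := hkey (t • x)
      have h2 : f (t • x) ≤ val (phat ⟨0, hn⟩) s + L * N (phat ⟨0, hn⟩ - t • x) :=
        hf_le _ _ hp₀
      have h3 : N (phat ⟨0, hn⟩ - t • x) ≤ N (phat ⟨0, hn⟩) + t * N x := by
        have h4 := hNadd (phat ⟨0, hn⟩) (-(t • x))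
        have h5 : phat ⟨0, hn⟩ + -(t • x) = phat ⟨0, hn⟩ - t • x := by abel
        rw [h5, hNneg, hNsmul, abs_of_pos ht] at h4
        exact h4
      have h6 : t * N x ≤ t := by nlinarith
      have h7 := (abs_le.mp (hvalM _ hp₀ s)).2
      rw [hdotp_smul] at h1
      have h9a : L * N (phat ⟨0, hn⟩ - t • x)
          ≤ L * N (phat ⟨0, hn⟩) + L * (t * N x) := by nlinarith
      have h9b : L * (t * N x) ≤ L * t := by nlinarith
      rw [hC'def]
      linarith
    by_contra hcon
    push_neg at hcon
    set d := dotp z x - L with hd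
    have hd0 : 0 < d := by rw [hd]; linarith
    set t := |C'| / d + 1 with htd
    have htpos : 0 < t := by positivity
    have hub := htb t htpos
    have h10 : t * d ≤ C' := by
      have he : t * d = t * dotp z x - L * t := by rw [hd]; ring
      linarith
    have h11 : |C'| + d ≤ t * d := by
      rw [htd, add_mul, div_mul_cancel₀ _ (ne_of_gt hd0), one_mul]
    have h12 := le_abs_self C'
    linarith
  have hκ_ub : ∀ c ∈ {c | ∃ z : Model S A, conjM f z < ⊤ ∧ c = dualN N z}, c ≤ L := by
    rintro c ⟨z, hz, rfl⟩
    have hdu : dualN N z = sSup {r | ∃ x : Model S A, N x ≤ 1 ∧ r = dotp z x} := rfl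
    rw [hdu]
    refine Real.sSup_le ?_ hL0
    rintro rr ⟨x, hx, rfl⟩
    exact hdom_le z hz x hx
  -- construct a dual element attaining L
  have hy0ne : (msingle (Classical.arbitrary S) (Classical.arbitrary A)
      (Classical.arbitrary S) : Model S A) ≠ 0 := by
    intro h
    have h2 := congrFun (congrFun (congrFun h (Classical.arbitrary S))
      (Classical.arbitrary A)) (Classical.arbitrary S)
    simp [msingle] at h2
  set y0 : Model S A :=
    msingle (Classical.arbitrary S) (Classical.arbitrary A) (Classical.arbitrary S) with hy0
  have hNy0 : 0 < N y0 := lt_of_le_of_ne (hNnn y0) (Ne.symm (fun h => hy0ne ((hN0 y0).mp h)))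
  set x0 : Model S A := (N y0)⁻¹ • y0 with hx0
  have hNx0 : N x0 = 1 := by
    rw [hx0, hNsmul, abs_of_nonneg (inv_nonneg.mpr (le_of_lt hNy0))]
    field_simp
  have hx0ne : x0 ≠ 0 := by
    intro h
    rw [h, hN00] at hNx0
    exact zero_ne_one hNx0
  obtain ⟨g, hg1, hg2⟩ :=
    exists_extension_of_le_sublinear (LinearPMap.mkSpanSingleton x0 L hx0ne)
      (fun v => L * N v)
      (fun c hc v => by
        show L * N (c • v) = c * (L * N v)
        rw [hNsmul, abs_of_pos hc]; ring)
      (fun v w => by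
        show L * N (v + w) ≤ L * N v + L * N w
        have := hNadd v w; nlinarith)
      (by
        rintro ⟨v, hv⟩
        obtain ⟨t, rfl⟩ := Submodule.mem_span_singleton.mp hv
        show ((LinearPMap.mkSpanSingleton x0 L hx0ne) ⟨t • x0, hv⟩ : ℝ) ≤ L * N (t • x0)
        rw [LinearPMap.mkSpanSingleton'_apply]
        have h1 : N (t • x0) = |t| := by rw [hNsmul, hNx0, mul_one]
        rw [h1]
        have := le_abs_self t
        simp only [smul_eq_mul, RingHom.id_apply]
        nlinarith)
  have hgx0 : g x0 = L := by
    have h1 := hg1 ⟨x0, Submodule.mem_span_singleton_self x0⟩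
    rw [LinearPMap.mkSpanSingleton_apply] at h1
    exact h1
  set z : Model S A := fun s0 a0 s0' => g (msingle s0 a0 s0') with hz
  have hzdot : ∀ q : Model S A, dotp z q = g q := fun q => dotp_linear g q
  set Z := ∑ s0, ∑ a0, ∑ s0', |z s0 a0 s0'| with hZ
  have hzdom : conjM f z < ⊤ := by
    have hub : ∀ q : Model S A, dotp z q - f q ≤ M + Z := by
      intro q
      have hlb : dotp z q - (M + Z) ≤ f q := by
        rw [hfset]
        refine le_csInf (hSne q) ?_
        rintro y ⟨p, hp, rfl⟩
        have h1 : g (q - p) ≤ L * N (q - p) := hg2 _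
        have h2 : g q - g p = g (q - p) := (map_sub g q p).symm
        have h3 : |dotp z p| ≤ Z := hdotp_ker z p hp
        have h4 := (abs_le.mp (hvalM p hp s)).1
        have h5 : dotp z p = g p := hzdot p
        have h6 : dotp z q = g q := hzdot q
        have h7 := abs_le.mp h3
        rw [hNsub p q]
        linarith [h7.1, h7.2]
      linarith
    calc conjM f z ≤ ((M + Z : ℝ) : EReal) := by
          refine iSup_le fun q => ?_
          exact_mod_cast hub q
      _ < ⊤ := EReal.coe_lt_top _
  have hzle : ∀ rr ∈ {r | ∃ x : Model S A, N x ≤ 1 ∧ r = dotp z x}, rr ≤ L := by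
    rintro rr ⟨x, hx, rfl⟩
    rw [hzdot]
    have h1 := hg2 x
    have h2 := hNnn x
    nlinarith
  have hdualz : dualN N z = L := by
    have hdu : dualN N z = sSup {r | ∃ x : Model S A, N x ≤ 1 ∧ r = dotp z x} := rfl
    rw [hdu]
    refine le_antisymm (Real.sSup_le hzle hL0) ?_
    have hmem : L ∈ {r | ∃ x : Model S A, N x ≤ 1 ∧ r = dotp z x} :=
      ⟨x0, le_of_eq hNx0, by rw [hzdot, hgx0]⟩
    exact le_csSup ⟨L, hzle⟩ hmem
  have hκL : κ = L := by
    rw [hκ]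
    refine le_antisymm (Real.sSup_le hκ_ub hL0) ?_
    exact le_csSup ⟨L, hκ_ub⟩ ⟨z, hzdom, hdualz.symm⟩
  -- norm comparison with the sup norm, continuity, measurability
  set Cn : ℝ := ∑ s0, ∑ a0, ∑ s0', N (msingle s0 a0 s0') with hCn
  have hCn0 : 0 ≤ Cn := by
    rw [hCn]
    refine Finset.sum_nonneg fun s0 _ => Finset.sum_nonneg fun a0 _ =>
      Finset.sum_nonneg fun s0' _ => hNnn _
  have hNdecomp : ∀ v : Model S A,
      N v ≤ ∑ s0, ∑ a0, ∑ s0', |v s0 a0 s0'| * N (msingle s0 a0 s0') := by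
    intro v
    conv_lhs => rw [← msingle_decomp v]
    refine le_trans (N_sum_le N hN00 hNadd _ _) ?_
    refine Finset.sum_le_sum fun s0 _ => ?_
    refine le_trans (N_sum_le N hN00 hNadd _ _) ?_
    refine Finset.sum_le_sum fun a0 _ => ?_
    refine le_trans (N_sum_le N hN00 hNadd _ _) ?_
    refine Finset.sum_le_sum fun s0' _ => ?_
    rw [hNsmul]
  have hNker : ∀ p : Model S A, IsKernel p → N p ≤ Cn := by
    intro p hp
    refine le_trans (hNdecomp p) ?_
    rw [hCn]
    refine Finset.sum_le_sum fun s0 _ => Finset.sum_le_sum fun a0 _ =>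
      Finset.sum_le_sum fun s0' _ => ?_
    have h := hker01 p hp s0 a0 s0'
    have h1 : |p s0 a0 s0'| ≤ 1 := by rw [abs_of_nonneg h.1]; exact h.2
    nlinarith [hNnn (msingle s0 a0 s0')]
  have hNnorm : ∀ v : Model S A, N v ≤ Cn * ‖v‖ := by
    intro v
    refine le_trans (hNdecomp v) ?_
    rw [hCn, Finset.sum_mul]
    refine Finset.sum_le_sum fun s0 _ => ?_
    rw [Finset.sum_mul]
    refine Finset.sum_le_sum fun a0 _ => ?_
    rw [Finset.sum_mul]
    refine Finset.sum_le_sum fun s0' _ => ?_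
    have h1 : |v s0 a0 s0'| ≤ ‖v‖ := by
      have a1 := norm_le_pi_norm v s0
      have a2 := norm_le_pi_norm (v s0) a0
      have a3 := norm_le_pi_norm (v s0 a0) s0'
      rw [Real.norm_eq_abs] at a3
      linarith
    nlinarith [hNnn (msingle s0 a0 s0'), abs_nonneg (v s0 a0 s0')]
  have hNcont : Continuous N := by
    have hlip : LipschitzWith (Real.toNNReal Cn) N := by
      refine LipschitzWith.of_dist_le_mul fun x y => ?_
      rw [Real.dist_eq, dist_eq_norm, Real.coe_toNNReal _ hCn0]
      have h1 : N x - N y ≤ N (x - y) := by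
        have h := hNadd (x - y) y
        have he : x - y + y = x := by abel
        rw [he] at h; linarith
      have h2 : N y - N x ≤ N (x - y) := by
        have h := hNadd (y - x) x
        have he : y - x + x = y := by abel
        rw [he, hNsub y x] at h; linarith
      have h3 := hNnorm (x - y)
      exact abs_sub_le_iff.mpr ⟨by linarith, by linarith⟩
    exact hlip.continuous
  have hfcont : Continuous f := by
    have hlip : LipschitzWith (Real.toNNReal (L * Cn)) f := by
      refine LipschitzWith.of_dist_le_mul fun x y => ?_
      rw [Real.dist_eq, dist_eq_norm, Real.coe_toNNReal _ (mul_nonneg hL0 hCn0)]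
      have h1 := abs_le.mp (hf_lip2 x y)
      have h2 := hNnorm (x - y)
      have h3 : L * N (x - y) ≤ L * Cn * ‖x - y‖ := by nlinarith
      exact abs_le.mpr ⟨by linarith [h1.1], by linarith [h1.2]⟩
    exact hlip.continuous
  have hfb_meas : Measurable fb := by
    have : Continuous fb := continuous_const.max (continuous_const.min hfcont)
    exact this.measurable
  have hev : ∀ (s0 : S) (a0 : A) (s0' : S), Measurable (fun p : Model S A => p s0 a0 s0') :=
    fun s0 a0 s0' =>
      (measurable_pi_apply s0').comp ((measurable_pi_apply a0).comp (measurable_pi_apply s0))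
  have hKmeas : MeasurableSet {p : Model S A | IsKernel p} := by
    have hset : {p : Model S A | IsKernel p} =
        ⋂ (s0 : S), ⋂ (a0 : A),
          ((⋂ (s0' : S), {p : Model S A | 0 ≤ p s0 a0 s0'}) ∩
            {p : Model S A | ∑ s', p s0 a0 s' = 1}) := by
      ext p
      simp only [Set.mem_setOf_eq, Set.mem_iInter, Set.mem_inter_iff]
      exact ⟨fun h s0 a0 => ⟨fun s0' => (h s0 a0).1 s0', (h s0 a0).2⟩,
        fun h s0 a0 => ⟨fun s0' => (h s0 a0).1 s0', (h s0 a0).2⟩⟩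
    rw [hset]
    refine MeasurableSet.iInter fun s0 => MeasurableSet.iInter fun a0 =>
      MeasurableSet.inter ?_ ?_
    · exact MeasurableSet.iInter fun s0' =>
        measurableSet_le measurable_const (hev s0 a0 s0')
    · exact measurableSet_eq_fun (Finset.measurable_sum _ fun s' _ => hev s0 a0 s')
        measurable_const
  haveI hprob_hat : IsProbabilityMeasure (empiricalM n phat) := by
    constructor
    rw [empiricalM, Measure.smul_apply, Measure.finset_sum_apply]
    simp only [measure_univ, Finset.sum_const, Finset.card_univ, Fintype.card_fin,
      nsmul_eq_mul, mul_one, smul_eq_mul]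
    exact ENNReal.inv_mul_cancel (by simp [hn.ne']) (by simp)
  have hhatnull : empiricalM n phat {p : Model S A | ¬ IsKernel p} = 0 := by
    rw [empiricalM, Measure.smul_apply, Measure.finset_sum_apply]
    have hz : ∀ i : Fin n, Measure.dirac (phat i) {p : Model S A | ¬ IsKernel p} = 0 := by
      intro i
      have hsetc : {p : Model S A | ¬ IsKernel p} = {p : Model S A | IsKernel p}ᶜ := rfl
      rw [hsetc, Measure.dirac_apply' _ hKmeas.compl]
      simp [Set.indicator, hphat i]
    simp [hz]
  have hint_hat : ∫ q, fb q ∂(empiricalM n phat)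
      = (1 / n : ℝ) * ∑ i : Fin n, val (phat i) s := by
    rw [empiricalM, integral_smul_measure, integral_finset_sum_measure (by
      intro i _
      exact Integrable.mono' (integrable_const M) hfb_meas.aestronglyMeasurable
        (ae_of_all _ fun q => by rw [Real.norm_eq_abs]; exact hfb_bd q))]
    simp only [integral_dirac, smul_eq_mul]
    congr 1
    · simp [ENNReal.toReal_inv, one_div]
    · exact Finset.sum_congr rfl fun i _ => hfb_eq _ (hphat i)
  have hNpmeas : Measurable (fun q : Model S A × Model S A => N (q.1 - q.2)) :=
    (hNcont.comp (continuous_fst.sub continuous_snd)).measurable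
  -- the empirical measure itself is admissible
  have hμhat_mem : IsProbabilityMeasure (empiricalM n phat) ∧
      empiricalM n phat {p : Model S A | ¬ IsKernel p} = 0 ∧
      wassDist N (empiricalM n phat) (empiricalM n phat) ≤ α := by
    refine ⟨hprob_hat, hhatnull, ?_⟩
    have hdiag : Measurable (fun p : Model S A => (p, p)) :=
      measurable_id.prodMk measurable_id
    have h0mem : (0:ℝ) ∈ {c | ∃ γc : Measure (Model S A × Model S A),
        IsProbabilityMeasure γc ∧ γc.map Prod.fst = empiricalM n phat ∧
        γc.map Prod.snd = empiricalM n phat ∧ c = ∫ q, N (q.1 - q.2) ∂γc} := by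
      refine ⟨(empiricalM n phat).map (fun p => (p, p)),
        Measure.isProbabilityMeasure_map hdiag.aemeasurable, ?_, ?_, ?_⟩
      · rw [Measure.map_map measurable_fst hdiag]
        exact Measure.map_id
      · rw [Measure.map_map measurable_snd hdiag]
        exact Measure.map_id
      · rw [integral_map hdiag.aemeasurable hNpmeas.aestronglyMeasurable]
        simp [sub_self, hN00]
    have hbdd : BddBelow {c | ∃ γc : Measure (Model S A × Model S A),
        IsProbabilityMeasure γc ∧ γc.map Prod.fst = empiricalM n phat ∧
        γc.map Prod.snd = empiricalM n phat ∧ c = ∫ q, N (q.1 - q.2) ∂γc} := by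
      refine ⟨0, ?_⟩
      rintro c ⟨γc, _, _, _, rfl⟩
      exact integral_nonneg fun q => hNnn _
    exact le_trans (csInf_le hbdd h0mem) hα
  refine ⟨?_, le_of_eq hκL⟩
  rw [ge_iff_le, hκL]
  haveI hne : Nonempty {μ : Measure (Model S A) //
      IsProbabilityMeasure μ ∧ μ {p : Model S A | ¬ IsKernel p} = 0 ∧
      wassDist N (empiricalM n phat) μ ≤ α} := ⟨⟨empiricalM n phat, hμhat_mem⟩⟩
  refine le_ciInf fun m => ?_
  obtain ⟨μ, hμp, hμnull, hμW⟩ := m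
  show (1 / n : ℝ) * (∑ i : Fin n, val (phat i) s) - L * α ≤ ∫ p, val p s ∂μ
  haveI := hμp
  have hae : (fun p => val p s) =ᵐ[μ] fb := by
    have hsub : {p : Model S A | ¬ (val p s = fb p)} ⊆ {p : Model S A | ¬ IsKernel p} :=
      fun p hp hk => hp ((hfb_eq p hk).symm)
    exact (MeasureTheory.ae_iff).mpr (measure_mono_null hsub hμnull)
  rw [integral_congr_ae hae]
  have hkey : ∀ c ∈ {c | ∃ γc : Measure (Model S A × Model S A),
      IsProbabilityMeasure γc ∧ γc.map Prod.fst = empiricalM n phat ∧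
      γc.map Prod.snd = μ ∧ c = ∫ q, N (q.1 - q.2) ∂γc},
      (1 / n : ℝ) * (∑ i : Fin n, val (phat i) s) - ∫ q, fb q ∂μ ≤ L * c := by
    rintro c ⟨γc, hγp, hγ1, hγ2, rfl⟩
    haveI := hγp
    have hRm : MeasurableSet (Set.range phat) := (Set.finite_range phat).measurableSet
    have hae1 : ∀ᵐ q ∂γc, q.1 ∈ Set.range phat := by
      rw [MeasureTheory.ae_iff]
      have hs1 : {q : Model S A × Model S A | ¬ q.1 ∈ Set.range phat}
          = Prod.fst ⁻¹' (Set.range phat)ᶜ := rfl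
      rw [hs1, ← Measure.map_apply measurable_fst hRm.compl, hγ1]
      rw [empiricalM, Measure.smul_apply, Measure.finset_sum_apply]
      have hz : ∀ i : Fin n, Measure.dirac (phat i) (Set.range phat)ᶜ = 0 := by
        intro i
        rw [Measure.dirac_apply' _ hRm.compl]
        simp [Set.indicator]
      simp [hz]
    have hae2 : ∀ᵐ q ∂γc, IsKernel q.2 := by
      rw [MeasureTheory.ae_iff]
      have hs2 : {q : Model S A × Model S A | ¬ IsKernel q.2}
          = Prod.snd ⁻¹' {p : Model S A | IsKernel p}ᶜ := rfl
      rw [hs2, ← Measure.map_apply measurable_snd hKmeas.compl, hγ2]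
      exact hμnull
    have haeB : ∀ᵐ q ∂γc, ‖N (q.1 - q.2)‖ ≤ (∑ i : Fin n, N (phat i)) + Cn := by
      filter_upwards [hae1, hae2] with q hq1 hq2
      obtain ⟨i, hi⟩ := hq1
      rw [Real.norm_eq_abs, abs_of_nonneg (hNnn _)]
      have h1 : N (q.1 - q.2) ≤ N q.1 + N q.2 := by
        have h := hNadd q.1 (-q.2)
        have he : q.1 + -q.2 = q.1 - q.2 := by abel
        rw [he, hNneg] at h
        exact h
      have h2 : N q.1 ≤ ∑ i : Fin n, N (phat i) := by
        rw [← hi]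
        exact Finset.single_le_sum (fun j _ => hNnn (phat j)) (Finset.mem_univ i)
      have h3 : N q.2 ≤ Cn := hNker q.2 hq2
      linarith
    have hNint : Integrable (fun q : Model S A × Model S A => N (q.1 - q.2)) γc :=
      Integrable.mono' (integrable_const _) hNpmeas.aestronglyMeasurable haeB
    have hint1 : Integrable (fun q : Model S A × Model S A => fb q.1) γc :=
      Integrable.mono' (integrable_const M)
        (hfb_meas.comp measurable_fst).aestronglyMeasurable
        (ae_of_all _ fun q => by rw [Real.norm_eq_abs]; exact hfb_bd _)
    have hint2 : Integrable (fun q : Model S A × Model S A => fb q.2) γc :=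
      Integrable.mono' (integrable_const M)
        (hfb_meas.comp measurable_snd).aestronglyMeasurable
        (ae_of_all _ fun q => by rw [Real.norm_eq_abs]; exact hfb_bd _)
    have e1 : ∫ q, fb q.1 ∂γc = (1 / n : ℝ) * ∑ i : Fin n, val (phat i) s := by
      have h := integral_map (μ := γc) measurable_fst.aemeasurable
        (f := fb) hfb_meas.aestronglyMeasurable
      rw [hγ1] at h
      rw [← h, hint_hat]
    have e2 : ∫ q, fb q.2 ∂γc = ∫ q, fb q ∂μ := by
      have h := integral_map (μ := γc) measurable_snd.aemeasurable
        (f := fb) hfb_meas.aestronglyMeasurable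
      rw [hγ2] at h
      rw [← h]
    have e3 : ∫ q, (fb q.1 - fb q.2) ∂γc = ∫ q, fb q.1 ∂γc - ∫ q, fb q.2 ∂γc :=
      integral_sub hint1 hint2
    have e4 : ∫ q, (fb q.1 - fb q.2) ∂γc ≤ ∫ q, L * N (q.1 - q.2) ∂γc := by
      refine integral_mono (hint1.sub hint2) (hNint.const_mul L) ?_
      intro q
      exact hfb_lip q.1 q.2
    rw [integral_const_mul, e3, e1, e2] at e4
    linarith
  have hc_ne : {c | ∃ γc : Measure (Model S A × Model S A),
      IsProbabilityMeasure γc ∧ γc.map Prod.fst = empiricalM n phat ∧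
      γc.map Prod.snd = μ ∧ c = ∫ q, N (q.1 - q.2) ∂γc}.Nonempty := by
    refine ⟨∫ q, N (q.1 - q.2) ∂((empiricalM n phat).prod μ),
      (empiricalM n phat).prod μ, inferInstance, ?_, ?_, rfl⟩
    · rw [Measure.map_fst_prod]
      simp [measure_univ]
    · rw [Measure.map_snd_prod]
      simp [measure_univ]
  rcases eq_or_lt_of_le hL0 with hLz | hLz
  · obtain ⟨c0, hc0⟩ := hc_ne
    have h1 := hkey c0 hc0
    rw [← hLz, zero_mul] at h1
    rw [← hLz, zero_mul]
    linarith
  · have hlow : ((1 / n : ℝ) * (∑ i : Fin n, val (phat i) s) - ∫ q, fb q ∂μ) / L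
        ≤ sInf {c | ∃ γc : Measure (Model S A × Model S A),
          IsProbabilityMeasure γc ∧ γc.map Prod.fst = empiricalM n phat ∧
          γc.map Prod.snd = μ ∧ c = ∫ q, N (q.1 - q.2) ∂γc} := by
      refine le_csInf hc_ne fun c hc => ?_
      rw [div_le_iff₀ hLz]
      have := hkey c hc
      linarith [this]
    have hsinf : sInf {c | ∃ γc : Measure (Model S A × Model S A),
        IsProbabilityMeasure γc ∧ γc.map Prod.fst = empiricalM n phat ∧
        γc.map Prod.snd = μ ∧ c = ∫ q, N (q.1 - q.2) ∂γc} ≤ α := hμW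
    have hfin := (div_le_iff₀ hLz).mp (le_trans hlow hsinf)
    rw [mul_comm] at hfin
    linarith
end
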